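/- Correctness of BiMPC with padding: under the hypotheses of the two-client BiMPC protocol with padding vectors p₁ˢ, p₂ˢ, pᵐ ∈ F_q^{n'}, defining s'' as the sum of all padded masked shares, m'' as the concatenation of (a ⊕ b) + k with pᵐ, k'₁ = Σᵢ k₁ˢᵢ + Σⱼ (p₁ˢⱼ - pᵐⱼ), and k'₂ = Σᵢ (k₂ˢᵢ - kᵢ) + Σⱼ p₂ˢⱼ, the master's output 2⁻¹·(Σᵢ s''ᵢ - Σᵢ m''ᵢ - k'₁ - k'₂) mod q equals the integer dot product a ⊙ b (as an element of F_q). -/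
import Mathlib


/-- Correctness of BiMPC with padding: the master's output
2⁻¹ (Σ s''ᵢ - Σ m''ᵢ - k'₁ - k'₂) equals the integer dot product a ⊙ b in F_q,
where s'' is the componentwise sum of the padded masked shares and m'' is the
concatenation of (a ⊕ b) + k with pᵐ. -/
theorem bimpc_correct_padded (n n' q : ℕ) (hq : q.Prime) (hlt : 2 * n < q)
    (a b : Fin n → ℤ)
    (ha : ∀ i, a i = 0 ∨ a i = 1) (hb : ∀ i, b i = 0 ∨ b i = 1)
    (k₁ k₂ k : Fin n → ZMod q) (p₁ p₂ pm : Fin n' → ZMod q) :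
    (2 : ZMod q)⁻¹ *
      ((∑ i : Fin (n + n'),
          (Fin.append (fun i => ((a i : ℤ) : ZMod q) + k₁ i) p₁ i
            + Fin.append (fun i => ((b i : ℤ) : ZMod q) + k₂ i) p₂ i))
        - (∑ i : Fin (n + n'),
            Fin.append (fun i => ((a i + b i - 2 * a i * b i : ℤ) : ZMod q) + k i) pm i)
        - ((∑ i, k₁ i) + ∑ j, (p₁ j - pm j))
        - ((∑ i, (k₂ i - k i)) + ∑ j, p₂ j))
      = (((∑ i, a i * b i : ℤ)) : ZMod q) := by
  have key : ((∑ i : Fin (n + n'),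
          (Fin.append (fun i => ((a i : ℤ) : ZMod q) + k₁ i) p₁ i
            + Fin.append (fun i => ((b i : ℤ) : ZMod q) + k₂ i) p₂ i))
        - (∑ i : Fin (n + n'),
            Fin.append (fun i => ((a i + b i - 2 * a i * b i : ℤ) : ZMod q) + k i) pm i)
        - ((∑ i, k₁ i) + ∑ j, (p₁ j - pm j))
        - ((∑ i, (k₂ i - k i)) + ∑ j, p₂ j))
      = 2 * (((∑ i, a i * b i : ℤ)) : ZMod q) := by
    simp only [Fin.sum_univ_add, Fin.append_left, Fin.append_right,
      Finset.sum_add_distrib, Finset.sum_sub_distrib]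
    push_cast
    simp only [Finset.sum_add_distrib, Finset.sum_sub_distrib]
    rw [Finset.mul_sum]
    simp only [← mul_assoc]
    ring
  rw [key]
  rcases Nat.eq_zero_or_pos n with hn | hn
  · subst hn; simp
  · haveI := Fact.mk hq
    have h2 : (2 : ZMod q) ≠ 0 := by
      have hq3 : 3 ≤ q := by omega
      intro h
      have : ((2 : ℕ) : ZMod q) = 0 := by exact_mod_cast h
      rw [ZMod.natCast_eq_zero_iff] at this
      have := Nat.le_of_dvd (by norm_num) this
      omega
    exact inv_mul_cancel_left₀ h2 _
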